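/- arXiv:2201.10049 — 2 statements merged into one kernel-verified Lean document; each statement's English description precedes it below -/
import Mathlib

section
/- Let G = (U, V, E) be an edge-weighted bipartite graph, ex a feasible label, and M a matching contained in the equivalence subgraph of ex. Let S ⊆ U and T ⊆ V be sets of vertices reachable by alternating paths from a fixed unmatched vertex u ∈ U within the equivalence subgraph, and suppose Δ = min { ex_u + ex_v − c(u,v) : u ∈ S, v ∈ V \ T, (u,v) ∈ E } > 0. Define ex'_u = ex_u − Δ for u ∈ S, ex'_v = ex_v + Δ for v ∈ T, and ex' = ex otherwise. Then ex' is a feasible label and every edge of M still lies in the equivalence subgraph of ex'. -/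
/-- A matching in a bipartite graph: a set of edges (pairs) that are pairwise
nonadjacent, i.e. two edges of the matching sharing an endpoint are equal. -/
def IsMatching {U V : Type} (M : Finset (U × V)) : Prop :=
  ∀ e ∈ M, ∀ e' ∈ M, (e.1 = e'.1 ∨ e.2 = e'.2) → e = e'

/-- The dual-adjustment step of the Hungarian (KM) algorithm: `ex` is a feasible
label, `M` a matching lying in the equivalence subgraph, `S ⊆ U`, `T ⊆ V` the
vertex sets reached by alternating paths from an unmatched root (so each matched
edge has its `U`-endpoint in `S` iff its `V`-endpoint is in `T`), and
`Δ = min { exU u + exV v − c (u,v) : u ∈ S, v ∉ T, (u,v) ∈ E } > 0`.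
Updating `ex'_u = ex_u − Δ` on `S` and `ex'_v = ex_v + Δ` on `T` (unchanged
elsewhere) yields a feasible label, and every edge of `M` remains in the
equivalence subgraph of the updated label. -/
theorem dual_adjustment_feasible_and_tight {U V : Type}
    [Fintype U] [Fintype V] [DecidableEq U] [DecidableEq V]
    (E : Finset (U × V)) (c : U × V → ℚ) (exU : U → ℚ) (exV : V → ℚ)
    (hfeas : ∀ e ∈ E, c e ≤ exU e.1 + exV e.2)
    (M : Finset (U × V)) (hME : M ⊆ E) (hM : IsMatching M)
    (htight : ∀ e ∈ M, exU e.1 + exV e.2 = c e)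
    (S : Finset U) (T : Finset V)
    (hST : ∀ e ∈ M, (e.1 ∈ S ↔ e.2 ∈ T))
    (Δ : ℚ) (hΔpos : 0 < Δ)
    (hΔle : ∀ e ∈ E, e.1 ∈ S → e.2 ∉ T → Δ ≤ exU e.1 + exV e.2 - c e)
    (hΔmem : ∃ e ∈ E, e.1 ∈ S ∧ e.2 ∉ T ∧ Δ = exU e.1 + exV e.2 - c e) :
    (∀ e ∈ E, c e ≤ (if e.1 ∈ S then exU e.1 - Δ else exU e.1) +
        (if e.2 ∈ T then exV e.2 + Δ else exV e.2)) ∧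
      (∀ e ∈ M, (if e.1 ∈ S then exU e.1 - Δ else exU e.1) +
        (if e.2 ∈ T then exV e.2 + Δ else exV e.2) = c e) := by
  constructor
  · intro e he
    by_cases h1 : e.1 ∈ S <;> by_cases h2 : e.2 ∈ T <;>
      simp only [h1, h2, if_pos, if_neg, not_false_iff, if_true, if_false]
    · linarith [hfeas e he]
    · linarith [hΔle e he h1 h2]
    · linarith [hfeas e he]
    · exact hfeas e he
  · intro e he
    have ht := htight e he
    rcases hST e he with hiff
    by_cases h1 : e.1 ∈ S
    · have h2 : e.2 ∈ T := hiff.mp h1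
      simp only [h1, h2, if_true]; linarith
    · have h2 : e.2 ∉ T := fun h => h1 (hiff.mpr h)
      simp only [h1, h2, if_false]; linarith
end

section
/- Let G = (U, V, E) be bipartite with feasible label ex and matching M contained in the equivalence subgraph, saturating all of U except one vertex u₀. If the equivalence subgraph contains an augmenting path from u₀ with respect to M, then augmenting M along this path yields a matching M' saturating U that is contained in the equivalence subgraph, and hence (when |M'| = |U| = |V|) M' is a maximum-weight perfect matching of G. -/
/-- An augmenting path `u₀, v₀, u₁, v₁, …, u_k, v_k` with respect to a matching `M`
in the bipartite graph with edge set `E`: it starts at the unmatched vertex `u₀`,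
alternates between non-matching edges `(uᵢ, vᵢ)` and matching edges `(uᵢ₊₁, vᵢ)`,
and ends at the unmatched vertex `v_k`. -/
structure AugPath {U V : Type} [DecidableEq U] [DecidableEq V]
    (E M : Finset (U × V)) where
  k : ℕ
  us : Fin (k + 1) → U
  vs : Fin (k + 1) → V
  us_inj : Function.Injective us
  vs_inj : Function.Injective vs
  edge_mem : ∀ i, (us i, vs i) ∈ E
  edge_notMem : ∀ i, (us i, vs i) ∉ M
  match_mem : ∀ i : Fin k, (us i.succ, vs i.castSucc) ∈ M
  start_unmatched : ∀ v, (us 0, v) ∉ M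
  end_unmatched : ∀ u, (u, vs (Fin.last k)) ∉ M


/-- The set of edges of an augmenting path. -/
def AugPath.edges {U V : Type} [DecidableEq U] [DecidableEq V]
    {E M : Finset (U × V)} (p : AugPath E M) : Finset (U × V) :=
  (Finset.univ.image fun i : Fin (p.k + 1) => (p.us i, p.vs i)) ∪
    (Finset.univ.image fun i : Fin p.k => (p.us i.succ, p.vs i.castSucc))

/-- One augmentation restores optimality: let `ex` be a feasible label and `M` a
matching lying in the equivalence subgraph that saturates all of `U` except the
vertex `u₀`.  If the equivalence subgraph contains an augmenting path from `u₀`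
with respect to `M`, then augmenting along it yields a matching `M' = M △ P`
that saturates `U`, lies in the equivalence subgraph, and hence (when
`|U| = |V|`, so that `M'` is perfect) is a maximum-weight perfect matching. -/
theorem augment_in_equality_subgraph_optimal {U V : Type}
    [Fintype U] [Fintype V] [DecidableEq U] [DecidableEq V]
    (E : Finset (U × V)) (c : U × V → ℚ) (exU : U → ℚ) (exV : V → ℚ)
    (hfeas : ∀ e ∈ E, c e ≤ exU e.1 + exV e.2)
    (M : Finset (U × V)) (hME : M ⊆ E) (hM : IsMatching M)
    (htight : ∀ e ∈ M, exU e.1 + exV e.2 = c e)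
    (u₀ : U) (hsat : ∀ u, u ≠ u₀ → ∃ v, (u, v) ∈ M) (hunm : ∀ v, (u₀, v) ∉ M)
    (p : AugPath (E.filter fun e => exU e.1 + exV e.2 = c e) M)
    (hstart : p.us 0 = u₀) :
    IsMatching (symmDiff M p.edges) ∧
      symmDiff M p.edges ⊆ E ∧
      (∀ e ∈ symmDiff M p.edges, exU e.1 + exV e.2 = c e) ∧
      (∀ u, ∃ v, (u, v) ∈ symmDiff M p.edges) ∧
      (Fintype.card U = Fintype.card V →
        ∀ N ⊆ E, IsMatching N → N.image Prod.fst = Finset.univ →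
          N.image Prod.snd = Finset.univ →
            ∑ e ∈ N, c e ≤ ∑ e ∈ symmDiff M p.edges, c e) := by

  classical
  set P := p.edges with hP
  have hmemP : ∀ e : U × V, e ∈ P ↔
      (∃ i, e = (p.us i, p.vs i)) ∨ ∃ i : Fin p.k, e = (p.us i.succ, p.vs i.castSucc) := by
    intro e
    simp [hP, AugPath.edges, eq_comm]
  have hmemM' : ∀ e : U × V, e ∈ symmDiff M P ↔ (e ∈ M ∧ e ∉ P) ∨ (e ∈ P ∧ e ∉ M) :=
    fun e => Finset.mem_symmDiff
  have hPE : ∀ i, (p.us i, p.vs i) ∈ E ∧ exU (p.us i) + exV (p.vs i) = c (p.us i, p.vs i) := by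
    intro i
    have h := p.edge_mem i
    simpa using Finset.mem_filter.mp h
  have hnoshare : ∀ e ∈ M, e ∉ P → ∀ i : Fin (p.k + 1), e.1 ≠ p.us i ∧ e.2 ≠ p.vs i := by
    intro e heM heP i
    constructor
    · intro h1
      rcases Fin.eq_zero_or_eq_succ i with rfl | ⟨j, rfl⟩
      · apply hunm e.2
        rw [← hstart, ← h1]
        exact heM
      · have he : e = (p.us j.succ, p.vs j.castSucc) :=
          hM e heM _ (p.match_mem j) (Or.inl h1)
        exact heP ((hmemP e).mpr (Or.inr ⟨j, he⟩))
    · intro h2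
      rcases Fin.eq_castSucc_or_eq_last i with ⟨j, rfl⟩ | rfl
      · have he : e = (p.us j.succ, p.vs j.castSucc) :=
          hM e heM _ (p.match_mem j) (Or.inr h2)
        exact heP ((hmemP e).mpr (Or.inr ⟨j, he⟩))
      · apply p.end_unmatched e.1
        rw [← h2]
        exact heM
  have hM' : IsMatching (symmDiff M P) := by
    intro e he e' he' hsh
    rcases (hmemM' e).mp he with ⟨heM, hePn⟩ | ⟨heP, heMn⟩ <;>
      rcases (hmemM' e').mp he' with ⟨heM', hePn'⟩ | ⟨heP', heMn'⟩
    · exact hM e heM e' heM' hsh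
    · rcases (hmemP e').mp heP' with ⟨i, rfl⟩ | ⟨j, rfl⟩
      · rcases hsh with h | h
        · exact absurd h (hnoshare e heM hePn i).1
        · exact absurd h (hnoshare e heM hePn i).2
      · exact absurd (p.match_mem j) heMn'
    · rcases (hmemP e).mp heP with ⟨i, rfl⟩ | ⟨j, rfl⟩
      · rcases hsh with h | h
        · exact absurd h.symm (hnoshare e' heM' hePn' i).1
        · exact absurd h.symm (hnoshare e' heM' hePn' i).2
      · exact absurd (p.match_mem j) heMn
    · rcases (hmemP e).mp heP with ⟨i, rfl⟩ | ⟨i, rfl⟩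
      · rcases (hmemP e').mp heP' with ⟨i', rfl⟩ | ⟨i', rfl⟩
        · rcases hsh with h | h
          · rw [p.us_inj h]
          · rw [p.vs_inj h]
        · exact absurd (p.match_mem i') heMn'
      · exact absurd (p.match_mem i) heMn
  have hsub : symmDiff M P ⊆ E := by
    intro e he
    rcases (hmemM' e).mp he with ⟨heM, _⟩ | ⟨heP, _⟩
    · exact hME heM
    · rcases (hmemP e).mp heP with ⟨i, rfl⟩ | ⟨j, rfl⟩
      · exact (hPE i).1
      · exact hME (p.match_mem j)
  have htight' : ∀ e ∈ symmDiff M P, exU e.1 + exV e.2 = c e := by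
    intro e he
    rcases (hmemM' e).mp he with ⟨heM, _⟩ | ⟨heP, _⟩
    · exact htight e heM
    · rcases (hmemP e).mp heP with ⟨i, rfl⟩ | ⟨j, rfl⟩
      · exact (hPE i).2
      · exact htight _ (p.match_mem j)
  have hsat' : ∀ u, ∃ v, (u, v) ∈ symmDiff M P := by
    intro u
    by_cases hu : ∃ i, u = p.us i
    · rcases hu with ⟨i, rfl⟩
      exact ⟨p.vs i, (hmemM' _).mpr
        (Or.inr ⟨(hmemP _).mpr (Or.inl ⟨i, rfl⟩), p.edge_notMem i⟩)⟩
    · push_neg at hu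
      have hu0 : u ≠ u₀ := by rw [← hstart]; exact hu 0
      obtain ⟨v, hv⟩ := hsat u hu0
      refine ⟨v, (hmemM' _).mpr (Or.inl ⟨hv, ?_⟩)⟩
      intro hvP
      rcases (hmemP _).mp hvP with ⟨i, hi⟩ | ⟨j, hj⟩
      · exact hu i (congrArg Prod.fst hi)
      · exact hu j.succ (congrArg Prod.fst hj)
  have hsum : ∀ N : Finset (U × V), IsMatching N →
      N.image Prod.fst = Finset.univ → N.image Prod.snd = Finset.univ →
      ∑ e ∈ N, (exU e.1 + exV e.2) = (∑ u, exU u) + (∑ v, exV v) := by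
    intro N hN h1 h2
    rw [Finset.sum_add_distrib, ← h1, ← h2,
      Finset.sum_image (fun x hx y hy h => hN x hx y hy (Or.inl h)),
      Finset.sum_image (fun x hx y hy h => hN x hx y hy (Or.inr h))]
  have himg1 : (symmDiff M P).image Prod.fst = Finset.univ := by
    apply Finset.eq_univ_of_forall
    intro u
    obtain ⟨v, hv⟩ := hsat' u
    exact Finset.mem_image.mpr ⟨(u, v), hv, rfl⟩
  have hcard : (symmDiff M P).card = Fintype.card U := by
    rw [← Finset.card_image_of_injOn
      (fun x hx y hy h => hM' x hx y hy (Or.inl h)), himg1, Finset.card_univ]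
  refine ⟨hM', hsub, htight', hsat', ?_⟩
  intro hUV N hNE hN hN1 hN2
  have himg2 : (symmDiff M P).image Prod.snd = Finset.univ := by
    apply Finset.eq_univ_of_card
    rw [Finset.card_image_of_injOn
      (fun x hx y hy h => hM' x hx y hy (Or.inr h)), hcard, hUV]
  calc ∑ e ∈ N, c e ≤ ∑ e ∈ N, (exU e.1 + exV e.2) :=
        Finset.sum_le_sum fun e he => hfeas e (hNE he)
    _ = (∑ u, exU u) + (∑ v, exV v) := hsum N hN hN1 hN2
    _ = ∑ e ∈ symmDiff M P, (exU e.1 + exV e.2) := (hsum _ hM' himg1 himg2).symm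
    _ = ∑ e ∈ symmDiff M P, c e := Finset.sum_congr rfl htight'
end
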